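/- Let G9 be the interlacement graph of the matching L9 = { {0,5}, {1,8}, {2,9}, {3,14}, {4,15}, {6,13}, {7,12}, {10,17}, {11,16} } of {0,...,17}, with vertex set {0,...,8} where vertex i corresponds to the i-th chord in the listed order and vertices i, j are adjacent if and only if the corresponding chords are interlaced. Let M be the 9×9 adjacency matrix of G9 over the field GF(2) of two elements. Then there is no diagonal matrix Λ over GF(2) such that M + Λ is idempotent, i.e., (M + Λ)·(M + Λ) = M + Λ; that is, G9 fails the Shtylla–Traldi–Zulli (STZ) condition. -/

import Mathlib

/-- Two sorted pairs (chords) are interlaced. -/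
def Interlaced (p q : ℕ × ℕ) : Prop :=
  (p.1 < q.1 ∧ q.1 < p.2 ∧ p.2 < q.2) ∨ (q.1 < p.1 ∧ p.1 < q.2 ∧ q.2 < p.2)

/-- Interlacement graph of a tuple of chords: vertex `i` corresponds to the `i`-th chord,
and two vertices are adjacent iff the corresponding chords are interlaced. -/
def interGraph {n : ℕ} (c : Fin n → ℕ × ℕ) : SimpleGraph (Fin n) where
  Adj i j := i ≠ j ∧ Interlaced (c i) (c j)
  symm := ⟨fun _ _ h => ⟨h.1.symm, Or.symm h.2⟩⟩
  loopless := ⟨fun _ h => h.1 rfl⟩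

/-- The chords of the matching `L9 = {{0,5},{1,8},{2,9},{3,14},{4,15},{6,13},{7,12},{10,17},{11,16}}`
of `{0, ..., 17}`, in the listed order. -/
def L9chords : Fin 9 → ℕ × ℕ :=
  ![(0, 5), (1, 8), (2, 9), (3, 14), (4, 15), (6, 13), (7, 12), (10, 17), (11, 16)]

/-- The interlacement graph of the matching `L9`. -/
def G9 : SimpleGraph (Fin 9) := interGraph L9chords

open Classical in
/-- Adjacency matrix of a simple graph over `GF(2) = ZMod 2`. -/
noncomputable def adjMat2 {V : Type*} (G : SimpleGraph V) : Matrix V V (ZMod 2) :=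
  Matrix.of fun i j => if G.Adj i j then 1 else 0

/-- The Shtylla–Traldi–Zulli condition: there is a diagonal matrix `Λ` over `GF(2)`
such that `M + Λ` is idempotent, where `M` is the adjacency matrix over `GF(2)`. -/
def CondSTZ {V : Type*} [Fintype V] [DecidableEq V] (G : SimpleGraph V) : Prop :=
  ∃ d : V → ZMod 2,
    (adjMat2 G + Matrix.diagonal d) * (adjMat2 G + Matrix.diagonal d)
      = adjMat2 G + Matrix.diagonal d


def M9 : Matrix (Fin 9) (Fin 9) (ZMod 2) :=
  !![0, 1, 1, 1, 1, 0, 0, 0, 0;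
    1, 0, 1, 1, 1, 1, 1, 0, 0;
    1, 1, 0, 1, 1, 1, 1, 0, 0;
    1, 1, 1, 0, 1, 0, 0, 1, 1;
    1, 1, 1, 1, 0, 0, 0, 1, 1;
    0, 1, 1, 0, 0, 0, 0, 1, 1;
    0, 1, 1, 0, 0, 0, 0, 1, 1;
    0, 0, 0, 1, 1, 1, 1, 0, 0;
    0, 0, 0, 1, 1, 1, 1, 0, 0]

lemma adjMat2_G9 : adjMat2 G9 = M9 := by
  ext i j
  fin_cases i <;> fin_cases j <;>
    simp [adjMat2, G9, interGraph, L9chords, Interlaced, M9] <;> decide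

set_option maxRecDepth 100000 in
/-- The interlacement graph `G9` of the matching `L9` fails the Shtylla–Traldi–Zulli
condition: there is no diagonal matrix `Λ` over `GF(2)` such that `M + Λ` is idempotent,
where `M` is the adjacency matrix of `G9` over `GF(2)`. -/
theorem G9_not_condSTZ : ¬ CondSTZ G9 := by
  rw [CondSTZ]
  simp only [adjMat2_G9]
  decide
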